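/- Let D ∈ (0,1), h ∈ SR_{1−D}, and set f(x) := x·h(1/x). Let (l_j)_{j≥1} be a fractal string whose packing defect δ(x) = ∑_{j=1}^∞ {l_j x} satisfies δ(x) ≍ f(x) as x → ∞. Then the string counting function J(ε) = #{ j : l_j > ε } satisfies J(1/x) ≍ f(x) as x → ∞. -/

import Mathlib

set_option maxHeartbeats 1000000

open Filter MeasureTheory Metric Set Topology

noncomputable section


lemma fract_le_of_nonneg {y : ℝ} (hy : 0 ≤ y) : Int.fract y ≤ y := by
  rw [Int.fract]
  have h : (0:ℝ) ≤ (⌊y⌋ : ℝ) := by exact_mod_cast Int.floor_nonneg.2 hy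
  linarith

lemma fractSummable {l : ℕ → ℝ} (hlpos : ∀ j, 0 < l j) (hlsum : Summable l) {t : ℝ} (ht : 0 ≤ t) :
    Summable (fun j => Int.fract (l j * t)) := by
  refine Summable.of_nonneg_of_le (fun j => Int.fract_nonneg _) (fun j => ?_) (hlsum.mul_right t)
  exact fract_le_of_nonneg (mul_nonneg (hlpos j).le ht)

lemma finiteGt {l : ℕ → ℝ} (hlsum : Summable l) {ε : ℝ} (hε : 0 < ε) :
    {j | ε < l j}.Finite := by
  have h0 := hlsum.tendsto_atTop_zero
  have hev : ∀ᶠ j in atTop, l j < ε := h0.eventually (eventually_lt_nhds hε)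
  rcases eventually_atTop.1 hev with ⟨N, hN⟩
  apply Set.Finite.subset (Set.finite_Iio N)
  intro j hj
  simp only [Set.mem_setOf_eq] at hj
  by_contra hjN
  exact absurd (hN j (not_lt.1 (by simpa [Set.mem_Iio] using hjN))) (not_lt.2 hj.le)

lemma two_fract (y : ℝ) : 2 * Int.fract y ≤ Int.fract (2*y) + (if (1:ℝ)/2 ≤ Int.fract y then 1 else 0) := by
  have h0 : (0:ℝ) ≤ Int.fract y := Int.fract_nonneg y
  have h1 : Int.fract y < 1 := Int.fract_lt_one y
  have hy : y = (⌊y⌋ : ℝ) + Int.fract y := by rw [Int.fract]; ring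
  by_cases hc : (1:ℝ)/2 ≤ Int.fract y
  · have h2 : Int.fract (2*y) = 2 * Int.fract y - 1 := by
      have he : 2*y = ((2*⌊y⌋ + 1 : ℤ) : ℝ) + (2 * Int.fract y - 1) := by push_cast; linarith
      rw [he, Int.fract_intCast_add, Int.fract_eq_self.2 ⟨by linarith, by linarith⟩]
    rw [h2, if_pos hc]; linarith
  · push_neg at hc
    have h2 : Int.fract (2*y) = 2 * Int.fract y := by
      have he : 2*y = ((2*⌊y⌋ : ℤ) : ℝ) + (2 * Int.fract y) := by push_cast; linarith
      rw [he, Int.fract_intCast_add, Int.fract_eq_self.2 ⟨by linarith, by linarith⟩]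
    rw [h2, if_neg (not_le.2 hc)]; linarith

lemma doubling {l : ℕ → ℝ} (hlpos : ∀ j, 0 < l j) (hlsum : Summable l) {z : ℝ} (hz : 0 < z) :
    2 * (∑' j, Int.fract (l j * z)) ≤ (∑' j, Int.fract (l j * (2*z)))
      + ({j | 1/(4*z) < l j}.ncard : ℝ) := by
  set e : ℕ → ℝ := fun j => if (1:ℝ)/2 ≤ Int.fract (l j * z) then 1 else 0 with he
  have hG : {j | 1/(4*z) < l j}.Finite := finiteGt hlsum (by positivity)
  have hsupp : ∀ j, j ∉ hG.toFinset → e j = 0 := by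
    intro j hj
    simp only [Set.Finite.mem_toFinset, Set.mem_setOf_eq, not_lt] at hj
    rw [he]
    simp only
    rw [if_neg]
    intro hcon
    have h1 : (1:ℝ)/2 ≤ l j * z := le_trans hcon (fract_le_of_nonneg (mul_nonneg (hlpos j).le hz.le))
    have : 1/(4*z) < l j := by
      rw [div_lt_iff₀ (by positivity)]
      nlinarith
    exact absurd this (not_lt.2 hj)
  have hSe : Summable e := summable_of_ne_finset_zero (s := hG.toFinset) (fun j hj => hsupp j hj)
  have hS1 : Summable (fun j => Int.fract (l j * z)) := fractSummable hlpos hlsum hz.le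
  have hS2 : Summable (fun j => Int.fract (l j * (2*z))) := fractSummable hlpos hlsum (by positivity)
  have key : 2 * (∑' j, Int.fract (l j * z)) ≤ ∑' j, (Int.fract (l j * (2*z)) + e j) := by
    rw [← tsum_mul_left]
    refine Summable.tsum_le_tsum (fun j => ?_) (hS1.mul_left 2) (hS2.add hSe)
    have := two_fract (l j * z)
    have hmul : 2 * (l j * z) = l j * (2*z) := by ring
    rw [hmul] at this
    exact this
  rw [Summable.tsum_add hS2 hSe] at key
  have hle : (∑' j, e j) ≤ ({j | 1/(4*z) < l j}.ncard : ℝ) := by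
    rw [tsum_eq_sum hsupp]
    have : ∑ j ∈ hG.toFinset, e j ≤ ∑ j ∈ hG.toFinset, (1:ℝ) := by
      refine Finset.sum_le_sum (fun j _ => ?_)
      rw [he]; simp only; split <;> norm_num
    simp only [Finset.sum_const, nsmul_eq_mul, mul_one] at this
    rw [Set.ncard_eq_toFinset_card _ hG]
    exact this
  linarith

lemma iterated {l : ℕ → ℝ} (hlpos : ∀ j, 0 < l j) (hlsum : Summable l) (n : ℕ) {x : ℝ} (hx : 0 < x) :
    (2:ℝ)^n * (∑' j, Int.fract (l j * x)) ≤ (∑' j, Int.fract (l j * (2^n * x)))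
      + ((2:ℝ)^n - 1) * ({j | 1/(2^(n+1)*x) < l j}.ncard : ℝ) := by
  induction n with
  | zero => simp
  | succ n ih =>
    have hxn : (0:ℝ) < 2^n * x := by positivity
    have hd := doubling hlpos hlsum hxn
    have hsub : {j | 1/(2^(n+1)*x) < l j} ⊆ {j | 1/(2^(n+2)*x) < l j} := by
      intro j hj
      simp only [Set.mem_setOf_eq] at *
      refine lt_of_le_of_lt ?_ hj
      apply div_le_div_of_nonneg_left (by norm_num) (by positivity)
      have h12 : (2:ℝ)^(n+1) ≤ 2^(n+2) := by
        apply pow_le_pow_right₀ (by norm_num) (by omega)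
      nlinarith
    have hfin : {j | 1/(2^(n+2)*x) < l j}.Finite := finiteGt hlsum (by positivity)
    have hmono : ({j | 1/(2^(n+1)*x) < l j}.ncard : ℝ) ≤ ({j | 1/(2^(n+2)*x) < l j}.ncard : ℝ) := by
      exact_mod_cast Set.ncard_le_ncard hsub hfin
    have harr : (2:ℝ) * (2^n * x) = 2^(n+1) * x := by ring
    have harr2 : 4 * (2^n * x) = 2^(n+2)*x := by ring
    rw [harr, harr2] at hd
    have hone : (1:ℝ) ≤ 2^n := one_le_pow₀ (by norm_num)
    have hA : (0:ℝ) ≤ ({j | 1/(2^(n+2)*x) < l j}.ncard : ℝ) := by positivity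
    have hA0 : (0:ℝ) ≤ ({j | 1/(2^(n+1)*x) < l j}.ncard : ℝ) := by positivity
    have h2 : (2:ℝ)^(n+1) * (∑' j, Int.fract (l j * x)) = 2 * ((2:ℝ)^n * (∑' j, Int.fract (l j * x))) := by ring
    rw [h2]
    calc 2 * ((2:ℝ)^n * (∑' j, Int.fract (l j * x)))
        ≤ 2 * ((∑' j, Int.fract (l j * (2^n * x))) + ((2:ℝ)^n - 1) * ({j | 1/(2^(n+1)*x) < l j}.ncard : ℝ)) := by
          linarith [ih]
      _ ≤ (∑' j, Int.fract (l j * (2^(n+1) * x))) + ({j | 1/(2^(n+2)*x) < l j}.ncard : ℝ)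
            + 2 * ((2:ℝ)^n - 1) * ({j | 1/(2^(n+2)*x) < l j}.ncard : ℝ) := by
          nlinarith [mul_le_mul_of_nonneg_left hmono (by linarith : (0:ℝ) ≤ 2*((2:ℝ)^n - 1))]
      _ ≤ (∑' j, Int.fract (l j * (2^(n+1) * x))) + ((2:ℝ)^(n+1) - 1) * ({j | 1/(2^(n+2)*x) < l j}.ncard : ℝ) := by
          nlinarith []


lemma fract_intble (c a b : ℝ) : IntervalIntegrable (fun t => Int.fract (c*t)) volume a b := by
  rw [intervalIntegrable_iff]
  apply Measure.integrableOn_of_bounded (M := 1)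
  · rw [Set.uIoc]; exact measure_Ioc_lt_top.ne
  · exact ((measurable_fract.comp (measurable_const_mul c)).aestronglyMeasurable)
  · filter_upwards with t
    rw [Real.norm_eq_abs, abs_of_nonneg (Int.fract_nonneg _)]
    exact (Int.fract_lt_one _).le

lemma fract_intble' (a b : ℝ) : IntervalIntegrable Int.fract volume a b := by
  have := fract_intble 1 a b
  simpa using this

lemma integral_fract_unit (n : ℤ) : ∫ u in (n:ℝ)..(n+1:ℝ), Int.fract u = 1/2 := by
  have h1 : ∫ u in (0:ℝ)..(1:ℝ), Int.fract (u + (n:ℝ)) = ∫ u in (0+(n:ℝ))..(1+(n:ℝ)), Int.fract u :=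
    intervalIntegral.integral_comp_add_right (fun u => Int.fract u) (n:ℝ)
  have h2 : ∀ u : ℝ, Int.fract (u + (n:ℝ)) = Int.fract u := fun u => Int.fract_add_intCast u n
  simp_rw [h2] at h1
  rw [show (0:ℝ)+(n:ℝ) = (n:ℝ) by ring] at h1
  rw [show (n:ℝ)+1 = 1+(n:ℝ) by ring, ← h1]
  have h3 : ∫ v in (0:ℝ)..(1:ℝ), Int.fract v = ∫ v in (0:ℝ)..(1:ℝ), v := by
    apply intervalIntegral.integral_congr_ae
    have hae : ({(1:ℝ)} : Set ℝ)ᶜ ∈ ae volume := compl_mem_ae_iff.2 (measure_singleton 1)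
    filter_upwards [hae] with v hv hvmem
    rw [Set.uIoc_of_le (by norm_num : (0:ℝ) ≤ 1)] at hvmem
    have hv1 : v ≠ 1 := by simpa using hv
    exact Int.fract_eq_self.2 ⟨hvmem.1.le, lt_of_le_of_ne hvmem.2 hv1⟩
  rw [h3, integral_id]
  norm_num

lemma integral_fract_int (m : ℤ) (p : ℕ) :
    ∫ u in (m:ℝ)..((m+p:ℤ):ℝ), Int.fract u = p/2 := by
  induction p with
  | zero => simp
  | succ p ih =>
    have key : (∫ u in (m:ℝ)..((m+p:ℤ):ℝ), Int.fract u) + (∫ u in ((m+p:ℤ):ℝ)..((m+p+1:ℤ):ℝ), Int.fract u)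
        = ∫ u in (m:ℝ)..((m+p+1:ℤ):ℝ), Int.fract u :=
      intervalIntegral.integral_add_adjacent_intervals (fract_intble' _ _) (fract_intble' _ _)
    have h2 : (∫ u in ((m+p:ℤ):ℝ)..((m+p+1:ℤ):ℝ), Int.fract u) = 1/2 := by
      have := integral_fract_unit (m+p)
      rw [show ((m+(p:ℤ)+1:ℤ):ℝ) = ((m+(p:ℤ):ℤ):ℝ)+1 by push_cast; ring]
      exact_mod_cast this
    have harr : ((m+((p:ℕ)+1:ℕ):ℤ):ℝ) = ((m+(p:ℤ)+1:ℤ):ℝ) := by push_cast; ring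
    rw [harr, ← key, ih, h2]
    push_cast; ring

lemma integral_fract_lb {A B : ℝ} (hAB : A ≤ B) :
    (B - A - 2)/2 ≤ ∫ u in A..B, Int.fract u := by
  by_cases hc : (⌈A⌉ : ℝ) ≤ (⌊B⌋ : ℝ)
  · have hA : A ≤ (⌈A⌉:ℝ) := Int.le_ceil A
    have hB : ((⌊B⌋:ℤ):ℝ) ≤ B := Int.floor_le B
    have k1 : (∫ u in A..(⌈A⌉:ℝ), Int.fract u) + (∫ u in (⌈A⌉:ℝ)..B, Int.fract u) = ∫ u in A..B, Int.fract u :=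
      intervalIntegral.integral_add_adjacent_intervals (fract_intble' _ _) (fract_intble' _ _)
    have k2 : (∫ u in (⌈A⌉:ℝ)..(⌊B⌋:ℝ), Int.fract u) + (∫ u in (⌊B⌋:ℝ)..B, Int.fract u) = ∫ u in (⌈A⌉:ℝ)..B, Int.fract u :=
      intervalIntegral.integral_add_adjacent_intervals (fract_intble' _ _) (fract_intble' _ _)
    have n1 : 0 ≤ ∫ u in A..(⌈A⌉:ℝ), Int.fract u :=
      intervalIntegral.integral_nonneg hA (fun u _ => Int.fract_nonneg u)
    have n2 : 0 ≤ ∫ u in (⌊B⌋:ℝ)..B, Int.fract u :=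
      intervalIntegral.integral_nonneg hB (fun u _ => Int.fract_nonneg u)
    have hmid : (∫ u in (⌈A⌉:ℝ)..(⌊B⌋:ℝ), Int.fract u) = ((⌊B⌋ - ⌈A⌉ : ℤ):ℝ)/2 := by
      have hp : ∃ p : ℕ, ⌊B⌋ = ⌈A⌉ + p := by
        refine ⟨(⌊B⌋ - ⌈A⌉).toNat, ?_⟩
        have : (0:ℤ) ≤ ⌊B⌋ - ⌈A⌉ := by exact_mod_cast sub_nonneg.2 hc
        omega
      rcases hp with ⟨p, hp⟩
      rw [hp, integral_fract_int ⌈A⌉ p]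
      push_cast; ring
    have hcast : ((⌊B⌋ - ⌈A⌉ : ℤ):ℝ) = (⌊B⌋:ℝ) - (⌈A⌉:ℝ) := by push_cast; ring
    have hflb : B - 1 ≤ ((⌊B⌋:ℤ):ℝ) := by have := Int.lt_floor_add_one B; linarith
    have hcub : ((⌈A⌉:ℤ):ℝ) ≤ A + 1 := by have := Int.ceil_lt_add_one A; linarith
    linarith [k1, k2, hmid, n1, n2]
  · push_neg at hc
    have h1 : (⌊B⌋:ℝ) + 1 ≤ (⌈A⌉:ℝ) := by
      have : ⌊B⌋ + 1 ≤ ⌈A⌉ := Int.add_one_le_of_lt (by exact_mod_cast hc)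
      exact_mod_cast this
    have hB : B - 1 ≤ ((⌊B⌋:ℤ):ℝ) := by have := Int.lt_floor_add_one B; linarith
    have hA : ((⌈A⌉:ℤ):ℝ) ≤ A + 1 := by have := Int.ceil_lt_add_one A; linarith
    have hnn : 0 ≤ ∫ u in A..B, Int.fract u :=
      intervalIntegral.integral_nonneg hAB (fun u _ => Int.fract_nonneg u)
    linarith

lemma integral_fract_comp_lb {lc x : ℝ} (hl : 0 < lc) (hx : 0 < x) (h4 : 4 ≤ lc * x) :
    x/4 ≤ ∫ t in x..2*x, Int.fract (lc*t) := by
  have hcomp : (∫ t in x..2*x, Int.fract (lc*t)) = lc⁻¹ • ∫ u in lc*x..lc*(2*x), Int.fract u :=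
    intervalIntegral.integral_comp_mul_left (fun u => Int.fract u) hl.ne'
  rw [hcomp, smul_eq_mul]
  have hlb := integral_fract_lb (by nlinarith : lc*x ≤ lc*(2*x))
  have h1 : lc*x/4 ≤ (lc*(2*x) - lc*x - 2)/2 := by nlinarith
  have h2 : lc⁻¹ * (lc*x/4) = x/4 := by field_simp
  rw [← h2]
  exact mul_le_mul_of_nonneg_left (le_trans h1 hlb) (by positivity)

lemma baire_unif {h : ℝ → ℝ} (hpos : ∀ y > 0, 0 < h y) {ρ : ℝ} (hρ0 : 0 < ρ)
    (hrv : ∀ t : ℝ, 0 < t → Tendsto (fun y => h (t*y) / h y) (𝓝[>] (0:ℝ)) (𝓝 (t ^ ρ)))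
    {y₁ : ℝ} (hy₁ : 0 < y₁) (hcont : ContinuousOn h (Set.Ioc 0 y₁)) :
    ∃ K, 0 < K ∧ ∃ y₀, 0 < y₀ ∧ ∀ y, 0 < y → y ≤ y₀ → ∀ σ, 1/2 ≤ σ → σ ≤ 1 →
      h (σ * y) ≤ K * h y := by
  classical
  -- the sets
  set c : ℕ → ℝ := fun n => min y₁ (1/(n+1)) with hc
  have hcpos : ∀ n, 0 < c n := fun n => lt_min hy₁ (by positivity)
  set E : ℕ → Set ℝ := fun n =>
    {σ | σ ∈ Set.Icc (1/2:ℝ) 1 ∧ ∀ y, 0 < y → y ≤ c n → h (σ*y) ≤ 2 * h y} with hE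
  -- closedness
  have hclosed : ∀ n, IsClosed (E n) := by
    intro n
    have hrepr : E n = ⋂ (y : {y : ℝ // 0 < y ∧ y ≤ c n}),
        (Set.Icc (1/2:ℝ) 1 ∩ (fun σ => h (σ * y.1)) ⁻¹' Set.Iic (2 * h y.1)) := by
      ext σ
      simp only [hE, Set.mem_setOf_eq, Set.mem_iInter, Set.mem_inter_iff, Set.mem_preimage,
        Set.mem_Iic, Subtype.forall]
      constructor
      · rintro ⟨h1, h2⟩ y ⟨hy0, hyc⟩; exact ⟨h1, h2 y hy0 hyc⟩
      · intro hall
        have hne : (0:ℝ) < c n := hcpos n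
        refine ⟨(hall (c n) ⟨hne, le_refl _⟩).1, fun y hy0 hyc => (hall y ⟨hy0, hyc⟩).2⟩
    rw [hrepr]
    refine isClosed_iInter (fun y => ?_)
    have hmaps : Set.MapsTo (fun σ : ℝ => σ * y.1) (Set.Icc (1/2:ℝ) 1) (Set.Ioc 0 y₁) := by
      intro σ hσ
      have hy0 := y.2.1
      have h0 : 0 < σ * y.1 := mul_pos (lt_of_lt_of_le (by norm_num) hσ.1) hy0
      have h1 : σ * y.1 ≤ y.1 := mul_le_of_le_one_left hy0.le hσ.2
      exact ⟨h0, h1.trans (y.2.2.trans (min_le_left _ _))⟩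
    have hcont2 : ContinuousOn (fun σ : ℝ => h (σ * y.1)) (Set.Icc (1/2:ℝ) 1) :=
      hcont.comp ((continuous_mul_right y.1).continuousOn) hmaps
    exact hcont2.preimage_isClosed_of_isClosed isClosed_Icc isClosed_Iic
  -- covering
  have hcover : ∀ σ : ℝ, σ ∈ Set.Icc (1/2:ℝ) 1 → ∃ n, σ ∈ E n := by
    intro σ hσ
    have hσ0 : (0:ℝ) < σ := lt_of_lt_of_le (by norm_num) hσ.1
    have hlim := hrv σ hσ0
    have hlt : σ ^ ρ < 2 := by
      have : σ ^ ρ ≤ 1 := Real.rpow_le_one hσ0.le hσ.2 hρ0.le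
      linarith
    have hev : ∀ᶠ y in 𝓝[>] (0:ℝ), h (σ*y)/h y < 2 := hlim.eventually_lt_const hlt
    rcases mem_nhdsGT_iff_exists_Ioc_subset.1 hev with ⟨u, hu, hsub⟩
    rw [Set.mem_Ioi] at hu
    rcases exists_nat_one_div_lt hu with ⟨n, hn⟩
    refine ⟨n, hσ, fun y hy0 hyc => ?_⟩
    have hyu : y ∈ Set.Ioc (0:ℝ) u := ⟨hy0, le_of_lt (lt_of_le_of_lt (hyc.trans (min_le_right _ _)) hn)⟩
    have hratio : h (σ*y)/h y < 2 := hsub hyu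
    have hhy : 0 < h y := hpos y hy0
    rw [div_lt_iff₀ hhy] at hratio
    linarith
  -- Baire category
  have hnum : ∃ N a b, 1/2 ≤ a ∧ a < b ∧ b ≤ 1 ∧ ∀ τ : ℝ, a ≤ τ → τ ≤ b → τ ∈ E N := by
    haveI : Nonempty (Set.Icc (1/2:ℝ) 1) := ⟨⟨1/2, by norm_num, by norm_num⟩⟩
    haveI : CompleteSpace (Set.Icc (1/2:ℝ) 1) := (isClosed_Icc).completeSpace_coe
    set F : ℕ → Set (Set.Icc (1/2:ℝ) 1) := fun n => ((↑) : _ → ℝ) ⁻¹' E n with hF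
    have hFclosed : ∀ n, IsClosed (F n) := fun n => (hclosed n).preimage continuous_subtype_val
    have hFunion : (⋃ n, F n) = Set.univ := by
      ext σ
      simp only [Set.mem_iUnion, Set.mem_univ, iff_true, hF, Set.mem_preimage]
      exact hcover σ.1 σ.2
    obtain ⟨N, hN⟩ := nonempty_interior_of_iUnion_of_closed hFclosed hFunion
    obtain ⟨σσ, hσσ⟩ := hN
    rcases mem_interior.1 hσσ with ⟨U, hUF, hUopen, hσU⟩
    rcases isOpen_induced_iff.1 hUopen with ⟨V, hVopen, hVU⟩
    have hσV : (σσ : ℝ) ∈ V := by rw [← hVU] at hσU; exact hσU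
    rcases Metric.isOpen_iff.1 hVopen _ hσV with ⟨ε, hε, hball⟩
    refine ⟨N, max (1/2) ((σσ:ℝ) - ε/2), min 1 ((σσ:ℝ) + ε/2), le_max_left _ _, ?_, min_le_left _ _, ?_⟩
    · rcases σσ.2 with ⟨h1, h2⟩
      apply max_lt <;> apply lt_min <;> linarith
    · intro τ hτ1 hτ2
      have hτIcc : τ ∈ Set.Icc (1/2:ℝ) 1 :=
        ⟨le_trans (le_max_left _ _) hτ1, le_trans hτ2 (min_le_left _ _)⟩
      have hτV : τ ∈ V := by
        apply hball
        rw [Metric.mem_ball, Real.dist_eq, abs_sub_lt_iff]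
        have := le_trans (le_max_right _ _) hτ1
        have := le_trans hτ2 (min_le_right _ _)
        constructor <;> linarith
      have : (⟨τ, hτIcc⟩ : Set.Icc (1/2:ℝ) 1) ∈ U := by rw [← hVU]; exact hτV
      exact hUF this
  obtain ⟨N, a, b, ha, hab, hb, hkey⟩ := hnum
  have ha0 : (0:ℝ) < a := lt_of_lt_of_le (by norm_num) ha
  set q := b / a with hq
  have hq1 : 1 < q := (one_lt_div ha0).2 hab
  obtain ⟨m, hm⟩ := pow_unbounded_of_one_lt (R := ℝ) 2 hq1
  have hqM : 2 ≤ q^(m+1) := le_trans hm.le (pow_le_pow_right₀ hq1.le (Nat.le_succ m))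
  have hcov2 : ∀ (M' : ℕ) (z : ℝ), 1 ≤ z → z ≤ q^(M'+1) → ∃ i, i ≤ M' ∧ q^i ≤ z ∧ z ≤ q^(i+1) := by
    intro M'
    induction M' with
    | zero => intro z h1 h2; exact ⟨0, le_refl 0, by simpa using h1, by simpa using h2⟩
    | succ M' ih =>
      intro z h1 h2
      by_cases hz : z ≤ q^(M'+1)
      · obtain ⟨i, hi, h3, h4⟩ := ih z h1 hz; exact ⟨i, hi.trans (Nat.le_succ _), h3, h4⟩
      · push_neg at hz
        exact ⟨M'+1, le_refl _, hz.le, h2⟩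
  have hcN : 0 < c N := hcpos N
  set rmax := q^m / (2*a) with hrmax
  have hq0 : (0:ℝ) < q := lt_trans one_pos hq1
  have hrmax0 : 0 < rmax := by positivity
  set B0 : ℝ := max 1 (rmax ^ ρ) + 1 with hB0
  have hB0pos : 0 < B0 := by
    have := le_max_left (1:ℝ) (rmax^ρ); rw [hB0]; linarith
  have hevAll : ∀ᶠ y in 𝓝[>](0:ℝ), ∀ i ∈ Finset.range (m+1), h ((q^i/(2*a)) * y) ≤ B0 * h y := by
    rw [eventually_all_finset]
    intro i hi
    have hri : (0:ℝ) < q^i/(2*a) := by positivity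
    have hlim := hrv _ hri
    have hrle : q^i/(2*a) ≤ rmax := by
      rw [hrmax]
      apply div_le_div_of_nonneg_right ?_ (by positivity)
      exact pow_le_pow_right₀ hq1.le (Nat.lt_succ_iff.1 (Finset.mem_range.1 hi))
    have hless : (q^i/(2*a)) ^ ρ < B0 := by
      have h2 : (q^i/(2*a))^ρ ≤ max 1 (rmax^ρ) := by
        rcases le_total (q^i/(2*a)) 1 with hc1 | hc1
        · exact le_max_of_le_left (Real.rpow_le_one hri.le hc1 hρ0.le)
        · exact le_max_of_le_right (Real.rpow_le_rpow hri.le hrle hρ0.le)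
      rw [hB0]; linarith
    have hev2 := hlim.eventually_lt_const hless
    filter_upwards [hev2, self_mem_nhdsWithin] with y hy1 hy2
    have hy0 : (0:ℝ) < y := hy2
    have := (div_lt_iff₀ (hpos y hy0)).1 hy1
    linarith
  rcases mem_nhdsGT_iff_exists_Ioc_subset.1 hevAll with ⟨u, hu0, husub⟩
  rw [Set.mem_Ioi] at hu0
  refine ⟨2*B0, by linarith, min u (c N / rmax), lt_min hu0 (by positivity), ?_⟩
  intro y hy0 hyle τ hτ1 hτ2
  obtain ⟨i, hiM, hq1z, hq2z⟩ := hcov2 m (2*τ) (by linarith) (by linarith)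
  have hr0 : (0:ℝ) < q^i/(2*a) := by positivity
  set r : ℝ := q^i/(2*a) with hrdef
  have hry0 : 0 < r * y := mul_pos hr0 hy0
  have hrle : r ≤ rmax := by
    rw [hrdef, hrmax]
    apply div_le_div_of_nonneg_right ?_ (by positivity)
    exact pow_le_pow_right₀ hq1.le hiM
  have hrycN : r * y ≤ c N := by
    have h1 : r * y ≤ rmax * y := by nlinarith
    have h2 : y ≤ c N / rmax := hyle.trans (min_le_right _ _)
    have h3 : rmax * y ≤ c N := by
      rw [le_div_iff₀ hrmax0] at h2; linarith [h2]
    linarith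
  have hσa : a ≤ τ / r := by
    rw [le_div_iff₀ hr0, hrdef]
    have : a * (q^i/(2*a)) = q^i/2 := by field_simp
    rw [this]; linarith
  have hσb : τ / r ≤ b := by
    rw [div_le_iff₀ hr0, hrdef]
    have hba : b = a * q := by rw [hq]; field_simp
    have : b * (q^i/(2*a)) = q^(i+1)/2 := by rw [hba, pow_succ]; field_simp
    rw [this]; linarith
  have hEN := hkey (τ/r) hσa hσb
  have happly := hEN.2 (r*y) hry0 hrycN
  have hτr : (τ/r) * (r*y) = τ*y := by field_simp
  rw [hτr] at happly
  have hiB : h (r*y) ≤ B0 * h y := by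
    have hymem : y ∈ Set.Ioc (0:ℝ) u := ⟨hy0, hyle.trans (min_le_left _ _)⟩
    exact husub hymem i (Finset.mem_range.2 (Nat.lt_succ_of_le hiM))
  calc h (τ*y) ≤ 2 * h (r*y) := happly
    _ ≤ 2*(B0 * h y) := by linarith
    _ = (2*B0) * h y := by ring

/-- Regular variation at `0` of index `ρ`. -/
def RegVaryAtZero (h : ℝ → ℝ) (ρ : ℝ) : Prop :=
  Measurable (fun y : Set.Ioi (0:ℝ) => h y) ∧
    ∀ t : ℝ, 0 < t →
      Tendsto (fun y => h (t * y) / h y) (𝓝[>] (0:ℝ)) (𝓝 (t ^ ρ))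

/-- Smooth variation at `0` of index `ρ`. -/
def SmoothVaryAtZero (h : ℝ → ℝ) (ρ : ℝ) : Prop :=
  RegVaryAtZero h ρ ∧ ∃ y₁ > (0:ℝ), ContDiffOn ℝ 1 h (Set.Ioc 0 y₁)

/-- For a fractal string `(l_j)` whose packing defect `δ(x) = ∑_j {l_j x}` satisfies
`δ(x) ≍ f(x) = x·h(1/x)` as `x → ∞` (with `h ∈ SR_{1-D}`, `D ∈ (0,1)`), the string
counting function `J(ε) = #{j : l_j > ε}` satisfies `J(1/x) ≍ f(x)` as `x → ∞`. -/
theorem statement18 (D : ℝ) (hD : D ∈ Set.Ioo (0:ℝ) 1)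
    (h : ℝ → ℝ) (hpos : ∀ y > 0, 0 < h y) (hsv : SmoothVaryAtZero h (1 - D))
    (l : ℕ → ℝ) (hlpos : ∀ j, 0 < l j) (hlmono : Antitone l) (hlsum : Summable l)
    (hδ : ∃ c C : ℝ, 0 < c ∧ 0 < C ∧ ∀ᶠ x in atTop,
      c * (x * h (1 / x)) ≤ (∑' j : ℕ, Int.fract (l j * x)) ∧
        (∑' j : ℕ, Int.fract (l j * x)) ≤ C * (x * h (1 / x))) :
    ∃ c C : ℝ, 0 < c ∧ 0 < C ∧ ∀ᶠ x in atTop,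
      c * (x * h (1 / x)) ≤ (Set.ncard {j : ℕ | 1 / x < l j} : ℝ) ∧
        (Set.ncard {j : ℕ | 1 / x < l j} : ℝ) ≤ C * (x * h (1 / x)) := by
  obtain ⟨hD0, hD1⟩ := hD
  obtain ⟨⟨hmeas, hrv⟩, y₁, hy₁, hcd⟩ := hsv
  set ρ : ℝ := 1 - D with hρdef
  have hρ0 : 0 < ρ := by simp [hρdef]; linarith
  obtain ⟨c, C, hc, hC, hev⟩ := hδ
  -- basic positivity
  have hfpos : ∀ x : ℝ, 0 < x → 0 < x * h (1/x) := fun x hx => mul_pos hx (hpos _ (by positivity))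
  -- 1/x tends to 0 within Ioi 0
  have h1x : Tendsto (fun x : ℝ => 1/x) atTop (𝓝[>] (0:ℝ)) := by
    apply tendsto_nhdsWithin_of_tendsto_nhds_of_eventually_within
    · simpa [one_div] using tendsto_inv_atTop_zero
    · filter_upwards [eventually_gt_atTop (0:ℝ)] with x hx
      simp only [Set.mem_Ioi]; positivity
  -- fixed-ratio upper and lower regular-variation bounds
  have hub : ∀ t A : ℝ, 0 < t → t ^ ρ < A → ∀ᶠ x : ℝ in atTop, h (t * (1/x)) ≤ A * h (1/x) := by
    intro t A ht hA
    have hcomp : Tendsto (fun x : ℝ => h (t*(1/x)) / h (1/x)) atTop (𝓝 (t^ρ)) := (hrv t ht).comp h1x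
    filter_upwards [hcomp.eventually_lt_const hA, eventually_gt_atTop (0:ℝ)] with x hx hx0
    have hh : 0 < h (1/x) := hpos _ (by positivity)
    rw [div_lt_iff₀ hh] at hx; linarith
  have hlb : ∀ t B : ℝ, 0 < t → B < t ^ ρ → ∀ᶠ x : ℝ in atTop, B * h (1/x) ≤ h (t * (1/x)) := by
    intro t B ht hB
    have hcomp : Tendsto (fun x : ℝ => h (t*(1/x)) / h (1/x)) atTop (𝓝 (t^ρ)) := (hrv t ht).comp h1x
    filter_upwards [hcomp.eventually_const_lt hB, eventually_gt_atTop (0:ℝ)] with x hx hx0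
    have hh : 0 < h (1/x) := hpos _ (by positivity)
    rw [lt_div_iff₀ hh] at hx; linarith
  -- LOWER BOUND
  have lower : ∃ c' : ℝ, 0 < c' ∧ ∀ᶠ x in atTop,
      c' * (x * h (1 / x)) ≤ (Set.ncard {j : ℕ | 1 / x < l j} : ℝ) := by
    have hb2 : 1 < (2:ℝ)^ρ := by
      rw [Real.one_lt_rpow_iff_of_pos (by norm_num : (0:ℝ) < 2)]
      exact Or.inl ⟨one_lt_two, hρ0⟩
    obtain ⟨n₀, hn₀⟩ := pow_unbounded_of_one_lt (R := ℝ) (8*C/c) hb2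
    set n : ℕ := n₀ + 1 with hn
    have hkeyρ : ∀ m : ℕ, ((2:ℝ)^m) ^ ρ = ((2:ℝ)^ρ)^m := by
      intro m
      rw [← Real.rpow_natCast (2:ℝ) m, ← Real.rpow_natCast ((2:ℝ)^ρ) m,
        ← Real.rpow_mul (by norm_num), ← Real.rpow_mul (by norm_num), mul_comm]
    have h2npos : (0:ℝ) < 2^n := by positivity
    have htn : (((2:ℝ)^n)⁻¹) ^ ρ < c/(8*C) := by
      rw [Real.inv_rpow (by positivity : (0:ℝ) ≤ (2:ℝ)^n) ρ, hkeyρ n]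
      have hP : 8*C/c < ((2:ℝ)^ρ)^n := lt_of_lt_of_le hn₀ (pow_le_pow_right₀ hb2.le (Nat.le_succ n₀))
      have hPc : (0:ℝ) < 8*C/c := by positivity
      rw [show c/(8*C) = (8*C/c)⁻¹ by rw [inv_div]]
      exact inv_strictAnti₀ hPc hP
    have hupev := hub (((2:ℝ)^n)⁻¹) (c/(8*C)) (by positivity) htn
    have hcomp2 : Tendsto (fun x : ℝ => (2:ℝ)^n * x) atTop atTop :=
      Tendsto.const_mul_atTop h2npos tendsto_id
    have hev2 := hcomp2.eventually hev
    have hA : ∀ᶠ x in atTop, (7*c/8) * (x * h (1/x)) ≤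
        (Set.ncard {j : ℕ | 1/(2^(n+1)*x) < l j} : ℝ) := by
      filter_upwards [hev, hev2, hupev, eventually_gt_atTop (0:ℝ)] with x hx1 hx2 hx3 hx0
      have hfx : 0 < x * h (1/x) := hfpos x hx0
      have hrw : 1/((2:ℝ)^n*x) = ((2:ℝ)^n)⁻¹ * (1/x) := by
        rw [one_div, mul_inv, one_div]
      have hδ2 : (∑' j, Int.fract (l j * ((2:ℝ)^n * x))) ≤ (c/8) * (2^n * (x * h (1/x))) := by
        have e1 := hx2.2
        calc (∑' j, Int.fract (l j * ((2:ℝ)^n * x))) ≤ C * ((2:ℝ)^n*x * h (1/((2:ℝ)^n*x))) := e1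
          _ ≤ C * ((2:ℝ)^n*x * ((c/(8*C)) * h (1/x))) := by
              apply mul_le_mul_of_nonneg_left _ hC.le
              apply mul_le_mul_of_nonneg_left _ (by positivity)
              rw [hrw]; exact hx3
          _ = (c/8) * (2^n * (x * h (1/x))) := by field_simp
      have iter := iterated hlpos hlsum n hx0
      have h2n1 : (0:ℝ) < 2^n - 1 := by
        have : (2:ℝ)^1 ≤ 2^n := pow_le_pow_right₀ one_le_two (by omega)
        simp at this; linarith
      set M : ℝ := (Set.ncard {j : ℕ | 1/(2^(n+1)*x) < l j} : ℝ) with hM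
      have hM0 : 0 ≤ M := by positivity
      have e2 : (2:ℝ)^n * (c * (x * h (1/x))) ≤ (2:ℝ)^n * (∑' j, Int.fract (l j * x)) :=
        mul_le_mul_of_nonneg_left hx1.1 (by positivity)
      -- combine
      have e3 : (7*c/8) * (2:ℝ)^n * (x * h (1/x)) ≤ ((2:ℝ)^n - 1) * M := by
        have := iter
        nlinarith [e2, hδ2, iter]
      have e4 : ((2:ℝ)^n - 1) * ((7*c/8) * (x * h (1/x))) ≤ ((2:ℝ)^n - 1) * M := by
        have h75 : (0:ℝ) ≤ 7*c/8 * (x * h (1/x)) := by positivity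
        nlinarith [e3]
      exact le_of_mul_le_mul_left e4 h2n1
    -- rescale
    rcases eventually_atTop.1 hA with ⟨x₂, hx₂⟩
    have hs : (0:ℝ) < 2^(n+1) := by positivity
    have hBpos : (0:ℝ) < ((2:ℝ)^(n+1))^ρ / 2 := by positivity
    have hlbev := hlb ((2:ℝ)^(n+1)) (((2:ℝ)^(n+1))^ρ/2) hs (by linarith [Real.rpow_pos_of_pos hs ρ])
    refine ⟨(7*c/8) * (((2:ℝ)^(n+1))^ρ/2) / 2^(n+1), by positivity, ?_⟩
    filter_upwards [eventually_ge_atTop ((2:ℝ)^(n+1) * x₂), hlbev, eventually_gt_atTop (0:ℝ),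
      eventually_gt_atTop ((2:ℝ)^(n+1) * 0)] with y hy1 hy2 hy0 _
    set x := y / 2^(n+1) with hxdef
    have hx2' : x₂ ≤ x := by
      rw [hxdef, le_div_iff₀ hs]; linarith
    have hxy : (2:ℝ)^(n+1) * x = y := by rw [hxdef]; field_simp
    have hAx := hx₂ x hx2'
    rw [hxy] at hAx
    have hx0 : 0 < x := by rw [hxdef]; positivity
    have hrw2 : 1/x = (2:ℝ)^(n+1) * (1/y) := by
      rw [hxdef]; field_simp
    have hfx : x * h (1/x) ≥ (1/2^(n+1)) * ((((2:ℝ)^(n+1))^ρ/2) * (y * h (1/y))) := by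
      rw [hrw2, hxdef]
      have := hy2
      have hhy : (0:ℝ) ≤ h (1/y) := (hpos _ (by positivity)).le
      calc y / 2^(n+1) * h ((2:ℝ)^(n+1) * (1/y)) ≥ y / 2^(n+1) * ((((2:ℝ)^(n+1))^ρ/2) * h (1/y)) := by
            apply mul_le_mul_of_nonneg_left hy2 (by positivity)
        _ = (1/2^(n+1)) * ((((2:ℝ)^(n+1))^ρ/2) * (y * h (1/y))) := by ring
    calc (7*c/8) * (((2:ℝ)^(n+1))^ρ/2) / 2^(n+1) * (y * h (1/y))
        = (7*c/8) * ((1/2^(n+1)) * ((((2:ℝ)^(n+1))^ρ/2) * (y * h (1/y)))) := by ring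
      _ ≤ (7*c/8) * (x * h (1/x)) := by
          apply mul_le_mul_of_nonneg_left hfx (by positivity)
      _ ≤ (Set.ncard {j : ℕ | 1/y < l j} : ℝ) := hAx
  -- UPPER BOUND
  have upper : ∃ C' : ℝ, 0 < C' ∧ ∀ᶠ x in atTop,
      (Set.ncard {j : ℕ | 1 / x < l j} : ℝ) ≤ C' * (x * h (1 / x)) := by
    have hcont : ContinuousOn h (Set.Ioc 0 y₁) := hcd.continuousOn
    obtain ⟨K, hK, y₀, hy₀, hbaire⟩ := baire_unif hpos hρ0 hrv hy₁ hcont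
    rcases eventually_atTop.1 hev with ⟨x₀, hx₀⟩
    have hub4 := hub 4 ((4:ℝ)^ρ+1) (by norm_num) (lt_add_one _)
    have hev4 := ((tendsto_id (α := ℝ)).atTop_div_const (by norm_num : (0:ℝ) < 4)).eventually hev
    refine ⟨8*C*K + C*((4:ℝ)^ρ+1), by positivity, ?_⟩
    filter_upwards [hub4, hev4, eventually_ge_atTop x₀, eventually_ge_atTop (1/y₀),
      eventually_gt_atTop (0:ℝ)] with x hx4 hevx4 hxx₀ hxy₀ hx0
    have hfx : 0 < x * h (1/x) := hfpos x hx0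
    have hS2fin : {j | 1/x < l j ∧ l j < 4/x}.Finite :=
      (finiteGt hlsum (by positivity : (0:ℝ) < 1/x)).subset (fun j hj => hj.1)
    have hS1fin : {j | 4/x ≤ l j}.Finite := by
      refine (finiteGt hlsum (by positivity : (0:ℝ) < 2/x)).subset (fun j hj => ?_)
      simp only [Set.mem_setOf_eq] at *
      have h24 : (2:ℝ)/x < 4/x := by
        rw [div_eq_mul_inv, div_eq_mul_inv]
        have hxi : (0:ℝ) < x⁻¹ := by positivity
        nlinarith
      linarith
    -- middle band bound
    have hmid : ({j | 1/x < l j ∧ l j < 4/x}.ncard : ℝ) ≤ C*((4:ℝ)^ρ+1) * (x * h (1/x)) := by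
      have hsum : ∀ j ∈ hS2fin.toFinset, (1/4 : ℝ) ≤ Int.fract (l j * (x/4)) := by
        intro j hj
        rw [Set.Finite.mem_toFinset] at hj
        have h1 : 1/x < l j := hj.1
        have h2 : l j < 4/x := hj.2
        rw [lt_div_iff₀ hx0] at h2
        rw [div_lt_iff₀ hx0] at h1
        have ha : l j * (x/4) < 1 := by nlinarith
        have hb : (1:ℝ)/4 < l j * (x/4) := by nlinarith
        rw [Int.fract_eq_self.2 ⟨by linarith, ha⟩]
        linarith
      have hcard : (hS2fin.toFinset.card : ℝ) * (1/4) ≤ ∑ j ∈ hS2fin.toFinset, Int.fract (l j * (x/4)) := by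
        calc (hS2fin.toFinset.card : ℝ) * (1/4) = ∑ _j ∈ hS2fin.toFinset, (1/4:ℝ) := by
              rw [Finset.sum_const, nsmul_eq_mul]
          _ ≤ ∑ j ∈ hS2fin.toFinset, Int.fract (l j * (x/4)) := Finset.sum_le_sum hsum
      have htsum : ∑ j ∈ hS2fin.toFinset, Int.fract (l j * (x/4)) ≤ ∑' j, Int.fract (l j * (x/4)) :=
        Summable.sum_le_tsum _ (fun j _ => Int.fract_nonneg _) (fractSummable hlpos hlsum (by positivity))
      have hd4 : (∑' j, Int.fract (l j * (x/4))) ≤ C * ((x/4) * h (1/(x/4))) := by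
        have := hevx4.2
        simpa using this
      have hrw4 : 1/(x/4) = 4*(1/x) := by
        rw [one_div_div, mul_one_div]
      have hd5 : C * ((x/4) * h (1/(x/4))) ≤ C * ((4:ℝ)^ρ+1)/4 * (x * h (1/x)) := by
        rw [hrw4]
        calc C * ((x/4) * h (4*(1/x))) ≤ C * ((x/4) * (((4:ℝ)^ρ+1) * h (1/x))) := by
              apply mul_le_mul_of_nonneg_left _ hC.le
              exact mul_le_mul_of_nonneg_left hx4 (by positivity)
          _ = C * ((4:ℝ)^ρ+1)/4 * (x * h (1/x)) := by ring
      rw [Set.ncard_eq_toFinset_card _ hS2fin]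
      have hrpos : (0:ℝ) < (4:ℝ)^ρ+1 := by positivity
      nlinarith [hcard, htsum, hd4, hd5]
    -- large band bound via integral
    have hptwise : ∀ t ∈ Set.Icc x (2*x), (∑ j ∈ hS1fin.toFinset, Int.fract (l j * t)) ≤ 2*C*K*(x * h (1/x)) := by
      intro t ht
      have ht0 : 0 < t := lt_of_lt_of_le hx0 ht.1
      have h1 : (∑ j ∈ hS1fin.toFinset, Int.fract (l j * t)) ≤ ∑' j, Int.fract (l j * t) :=
        Summable.sum_le_tsum _ (fun j _ => Int.fract_nonneg _) (fractSummable hlpos hlsum ht0.le)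
      have h2 : (∑' j, Int.fract (l j * t)) ≤ C * (t * h (1/t)) :=
        (hx₀ t (le_trans hxx₀ ht.1)).2
      have h3 : h (1/t) ≤ K * h (1/x) := by
        have hσ1 : 1/2 ≤ x/t := by
          rw [le_div_iff₀ ht0]; linarith [ht.2]
        have hσ2 : x/t ≤ 1 := by
          rw [div_le_one ht0]; exact ht.1
        have hy0' : (0:ℝ) < 1/x := by positivity
        have hyle : 1/x ≤ y₀ := by
          have h5 := one_div_le_one_div_of_le (by positivity : (0:ℝ) < 1/y₀) hxy₀
          rwa [one_div_one_div] at h5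
        have hb := hbaire (1/x) hy0' hyle (x/t) hσ1 hσ2
        rw [show (x/t)*(1/x) = 1/t by field_simp] at hb
        exact hb
      have hht : 0 ≤ h (1/t) := (hpos _ (by positivity)).le
      have h4 : t * h (1/t) ≤ 2*x * h (1/t) := by nlinarith [ht.2]
      have h5 : 2*x * h (1/t) ≤ 2*x * (K * h (1/x)) :=
        mul_le_mul_of_nonneg_left h3 (by positivity)
      calc (∑ j ∈ hS1fin.toFinset, Int.fract (l j * t)) ≤ C * (t * h (1/t)) := le_trans h1 h2
        _ ≤ C * (2*x * (K * h (1/x))) := by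
            apply mul_le_mul_of_nonneg_left _ hC.le
            linarith
        _ = 2*C*K*(x * h (1/x)) := by ring
    have hint_each : ∀ j ∈ hS1fin.toFinset, x/4 ≤ ∫ t in x..2*x, Int.fract (l j * t) := by
      intro j hj
      rw [Set.Finite.mem_toFinset] at hj
      have h44 : 4 ≤ l j * x := by
        rw [Set.mem_setOf_eq, div_le_iff₀ hx0] at hj
        linarith
      exact integral_fract_comp_lb (hlpos j) hx0 h44
    have hsum_int : (hS1fin.toFinset.card : ℝ) * (x/4) ≤ ∑ j ∈ hS1fin.toFinset, ∫ t in x..2*x, Int.fract (l j * t) := by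
      calc (hS1fin.toFinset.card : ℝ) * (x/4) = ∑ _j ∈ hS1fin.toFinset, (x/4 : ℝ) := by
            rw [Finset.sum_const, nsmul_eq_mul]
        _ ≤ ∑ j ∈ hS1fin.toFinset, ∫ t in x..2*x, Int.fract (l j * t) := Finset.sum_le_sum hint_each
    have hswap : (∑ j ∈ hS1fin.toFinset, ∫ t in x..2*x, Int.fract (l j * t))
        = ∫ t in x..2*x, (∑ j ∈ hS1fin.toFinset, Int.fract (l j * t)) :=
      (intervalIntegral.integral_finset_sum (fun j _ => fract_intble (l j) x (2*x))).symm
    have hintble_sum : IntervalIntegrable (fun t => ∑ j ∈ hS1fin.toFinset, Int.fract (l j * t)) volume x (2*x) := by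
      have hii := IntervalIntegrable.sum (μ := volume) (a := x) (b := 2*x) hS1fin.toFinset
        (f := fun j => fun t => Int.fract (l j * t)) (fun j _ => fract_intble (l j) x (2*x))
      have heq : (fun t => ∑ j ∈ hS1fin.toFinset, Int.fract (l j * t))
          = (∑ j ∈ hS1fin.toFinset, fun t => Int.fract (l j * t)) := by
        ext t; simp [Finset.sum_apply]
      rw [heq]; exact hii
    have hmono_int : (∫ t in x..2*x, (∑ j ∈ hS1fin.toFinset, Int.fract (l j * t)))
        ≤ ∫ _t in x..2*x, (2*C*K*(x * h (1/x))) :=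
      intervalIntegral.integral_mono_on (by linarith) hintble_sum intervalIntegrable_const hptwise
    have hconst : (∫ _t in x..2*x, (2*C*K*(x * h (1/x)))) = x * (2*C*K*(x * h (1/x))) := by
      rw [intervalIntegral.integral_const, smul_eq_mul]; ring
    have hS1card : ((hS1fin.toFinset.card : ℝ)) ≤ 8*C*K*(x * h (1/x)) := by
      have hA : (hS1fin.toFinset.card : ℝ) * (x/4) ≤ x * (2*C*K*(x * h (1/x))) := by
        calc (hS1fin.toFinset.card : ℝ) * (x/4)
            ≤ ∑ j ∈ hS1fin.toFinset, ∫ t in x..2*x, Int.fract (l j * t) := hsum_int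
          _ = ∫ t in x..2*x, (∑ j ∈ hS1fin.toFinset, Int.fract (l j * t)) := hswap
          _ ≤ ∫ _t in x..2*x, (2*C*K*(x * h (1/x))) := hmono_int
          _ = x * (2*C*K*(x * h (1/x))) := hconst
      have h8 : (hS1fin.toFinset.card : ℝ) * (x/4) ≤ (8*C*K*(x * h (1/x))) * (x/4) := by
        calc (hS1fin.toFinset.card : ℝ) * (x/4) ≤ x * (2*C*K*(x * h (1/x))) := hA
          _ = (8*C*K*(x * h (1/x))) * (x/4) := by ring
      exact le_of_mul_le_mul_right h8 (by positivity)
    -- combine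
    have hsplit : {j : ℕ | 1/x < l j} ⊆ {j | 4/x ≤ l j} ∪ {j | 1/x < l j ∧ l j < 4/x} := by
      intro j hj
      rcases le_or_gt (4/x) (l j) with hca | hca
      · exact Or.inl hca
      · exact Or.inr ⟨hj, hca⟩
    have hcount : ({j : ℕ | 1/x < l j}.ncard : ℝ) ≤ ({j | 4/x ≤ l j}.ncard : ℝ) + ({j | 1/x < l j ∧ l j < 4/x}.ncard : ℝ) := by
      have h1 : {j : ℕ | 1/x < l j}.ncard ≤ ({j | 4/x ≤ l j} ∪ {j | 1/x < l j ∧ l j < 4/x}).ncard :=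
        Set.ncard_le_ncard hsplit (hS1fin.union hS2fin)
      have h2 := Set.ncard_union_le {j | 4/x ≤ l j} {j | 1/x < l j ∧ l j < 4/x}
      exact_mod_cast le_trans h1 h2
    have hS1n : ({j | 4/x ≤ l j}.ncard : ℝ) ≤ 8*C*K*(x * h (1/x)) := by
      rw [Set.ncard_eq_toFinset_card _ hS1fin]
      exact hS1card
    calc ({j : ℕ | 1/x < l j}.ncard : ℝ) ≤ ({j | 4/x ≤ l j}.ncard : ℝ) + ({j | 1/x < l j ∧ l j < 4/x}.ncard : ℝ) := hcount
      _ ≤ 8*C*K*(x * h (1/x)) + C*((4:ℝ)^ρ+1) * (x * h (1/x)) := add_le_add hS1n hmid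
      _ = (8*C*K + C*((4:ℝ)^ρ+1)) * (x * h (1/x)) := by ring
  obtain ⟨c', hc', hl'⟩ := lower
  obtain ⟨C', hC', hu'⟩ := upper
  exact ⟨c', C', hc', hC', by filter_upwards [hl', hu'] with x h1 h2 using ⟨h1, h2⟩⟩
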